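/- In the shock-surface setting, fix η ≠ 0, assume B > 0, and set N̄₀ := η R (A/(1 − k r²)) (E/C) (ψ C)⁻¹ and N̄₁ := η R / A. Then for every real number λ (representing the shock speed ṙ̄ = dr̄/dt), with n̄₀ := −λ/(R ψ C) and n̄₁ := 1/R + λ Ṙ r̄/(R² A), one has −(1/B) N̄₀ n̄₀ + A N̄₁ n̄₁ = η. (That is, the inner product ⟨N̄, n̄⟩, computed with the TOV inverse metric coefficients −1/B and A, equals the prescribed constant η = ⟨N, n⟩; so the transverse vector normalization is continuous across the shock.) -/

import Mathlib

open Real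

/-- on the FRW/TOV shock surface, the inner product `⟨N̄, n̄⟩` of the
transverse covector `N̄` with the normal covector `n̄`, computed with the TOV inverse
metric coefficients `−1/B` and `A`, equals the prescribed constant `η`, for every
value `λ` of the shock speed `dr̄/dt`. -/
theorem stmt_17 (𝒢 k ρ R Rdot r rb M A C E ψ B η : ℝ)
    (h𝒢 : 0 < 𝒢) (hR : 0 < R) (hkr : 1 - k * r ^ 2 ≠ 0)
    (hrb : rb = R * r) (hrb0 : rb ≠ 0)
    (hFried : Rdot ^ 2 + k = 8 * π * 𝒢 / 3 * ρ * R ^ 2)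
    (hM : M = 4 * π / 3 * ρ * rb ^ 3)
    (hA : A = 1 - 2 * 𝒢 * M / rb) (hA0 : A ≠ 0)
    (hC : C = R ^ 2 * (1 - 8 * π * 𝒢 / 3 * ρ * R ^ 2 * r ^ 2))
    (hE : E = -(R * Rdot * rb))
    (hψ : ψ ≠ 0)
    (hmatch : B * (R ^ 2 - k * rb ^ 2) * ψ ^ 2 * C = 1)
    (hη : η ≠ 0) (hB : 0 < B) :
    ∀ lam : ℝ,
      -(1 / B) * (η * R * (A / (1 - k * r ^ 2)) * (E / C) * (ψ * C)⁻¹) *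
          (-(lam / (R * ψ * C))) +
        A * (η * R / A) * (1 / R + lam * Rdot * rb / (R ^ 2 * A)) = η := by
  intro lam
  have hR0 : R ≠ 0 := ne_of_gt hR
  have hB0 : B ≠ 0 := ne_of_gt hB
  have hr0 : r ≠ 0 := by
    intro h; apply hrb0; rw [hrb, h, mul_zero]
  have hCA : C = R ^ 2 * A := by
    rw [hC, hA, hM, hrb]
    field_simp
    ring
  have hBinv : B * (1 - k * r ^ 2) * ψ ^ 2 * A * R ^ 4 = 1 := by
    rw [hrb, hCA] at hmatch
    linear_combination hmatch
  subst hE hrb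
  rw [hCA]
  have hT1 : -(1 / B) * (η * R * (A / (1 - k * r ^ 2)) *
        (-(R * Rdot * (R * r)) / (R ^ 2 * A)) * (ψ * (R ^ 2 * A))⁻¹) *
        (-(lam / (R * ψ * (R ^ 2 * A)))) = -(η * Rdot * r * lam) / A := by
    field_simp
    linear_combination (Rdot * lam) * hBinv
  rw [hT1]
  field_simp
  ring
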